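/- (Levinson–Durbin update used for the gain of goodness of fit.) Let M ≥ 1 and γ_0, γ_1, …, γ_M ∈ ℝ be such that for every 1 ≤ L ≤ M the L×L symmetric Toeplitz matrix Γ_L with (i,j) entry γ_{|i−j|} is positive definite. Set e_0 = γ_0 and, for 1 ≤ L ≤ M, let g_L = (γ_1, …, γ_L)ᵀ, Ψ_L = −Γ_L^{-1} g_L ∈ ℝ^L with last coordinate ψ_{L,L}, and e_L = γ_0 − g_Lᵀ Γ_L^{-1} g_L. Then for every 1 ≤ L ≤ M, e_L = (1 − ψ_{L,L}²) e_{L−1}; in particular e_{L−1}/e_L = 1/(1 − ψ_{L,L}²) whenever e_L ≠ 0. -/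

import Mathlib

open Matrix

/-- The order-`L` autocovariance (symmetric Toeplitz) matrix `Γ_L` with `(i,j)` entry
`γ_{|i-j|}`, built from the autocovariances `γ`. -/
def toeplitzCov (γ : ℕ → ℝ) (L : ℕ) : Matrix (Fin L) (Fin L) ℝ :=
  fun i j => γ (((i : ℤ) - (j : ℤ)).natAbs)

/-- The autocovariance vector `g_L = (γ_1, …, γ_L)ᵀ`. -/
def covVec (γ : ℕ → ℝ) (L : ℕ) : Fin L → ℝ := fun i => γ ((i : ℕ) + 1)

/-- The best linear prediction coefficient vector `Ψ_L = -Γ_L⁻¹ g_L`. -/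
noncomputable def bestPredictor (γ : ℕ → ℝ) (L : ℕ) : Fin L → ℝ :=
  -((toeplitzCov γ L)⁻¹ *ᵥ covVec γ L)

/-- The last coordinate `ψ_{L,L}` of `Ψ_L` (the partial autocorrelation), for `L ≥ 1`;
junk value `0` for `L = 0`. -/
noncomputable def psiLL (γ : ℕ → ℝ) (L : ℕ) : ℝ :=
  if h : 0 < L then bestPredictor γ L ⟨L - 1, by omega⟩ else 0

/-- The minimal one-step prediction error `e_L = γ_0 - g_Lᵀ Γ_L⁻¹ g_L` of the order-`L`
linear predictor, with `e_0 = γ_0`. -/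
noncomputable def predError (γ : ℕ → ℝ) (L : ℕ) : ℝ :=
  γ 0 - covVec γ L ⬝ᵥ ((toeplitzCov γ L)⁻¹ *ᵥ covVec γ L)

section Aux

variable (γ : ℕ → ℝ)

lemma LD.posDef_zero : (toeplitzCov γ 0).PosDef := by
  constructor
  · ext i _; exact i.elim0
  · intro x hx
    exact absurd (Subsingleton.elim x 0) hx

lemma LD.gamma_mulVec {L : ℕ} (h : (toeplitzCov γ L).PosDef) :
    toeplitzCov γ L *ᵥ bestPredictor γ L = -(covVec γ L) := by
  have hu : IsUnit (toeplitzCov γ L).det := isUnit_iff_ne_zero.mpr h.det_pos.ne'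
  simp [bestPredictor, Matrix.mulVec_neg, mulVec_mulVec, Matrix.mul_nonsing_inv _ hu]

lemma LD.eq_bestPredictor {L : ℕ} (h : (toeplitzCov γ L).PosDef) (x : Fin L → ℝ)
    (hx : toeplitzCov γ L *ᵥ x = -(covVec γ L)) : x = bestPredictor γ L := by
  have hu : IsUnit (toeplitzCov γ L).det := isUnit_iff_ne_zero.mpr h.det_pos.ne'
  have h2 : (toeplitzCov γ L)⁻¹ *ᵥ (toeplitzCov γ L *ᵥ x)
      = (toeplitzCov γ L)⁻¹ *ᵥ (-(covVec γ L)) := by rw [hx]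
  rw [mulVec_mulVec, Matrix.nonsing_inv_mul _ hu, one_mulVec, Matrix.mulVec_neg] at h2
  rw [h2]; rfl

lemma LD.predError_eq (L : ℕ) :
    predError γ L = γ 0 + covVec γ L ⬝ᵥ bestPredictor γ L := by
  simp [predError, bestPredictor, dotProduct_neg, sub_eq_add_neg]

-- entry lemmas
lemma LD.hcc {L : ℕ} (i j : Fin L) :
    toeplitzCov γ (L+1) i.castSucc j.castSucc = toeplitzCov γ L i j := by
  simp [toeplitzCov]

lemma LD.hcl {L : ℕ} (i : Fin L) :
    toeplitzCov γ (L+1) i.castSucc (Fin.last L) = γ (L - i) := by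
  have hi := i.isLt
  simp only [toeplitzCov, Fin.coe_castSucc, Fin.val_last]
  congr 1
  omega

lemma LD.hlc {L : ℕ} (j : Fin L) :
    toeplitzCov γ (L+1) (Fin.last L) j.castSucc = γ (L - j) := by
  have hj := j.isLt
  simp only [toeplitzCov, Fin.coe_castSucc, Fin.val_last]
  congr 1
  omega

lemma LD.hll {L : ℕ} : toeplitzCov γ (L+1) (Fin.last L) (Fin.last L) = γ 0 := by
  simp [toeplitzCov]

lemma LD.h00 {L : ℕ} : toeplitzCov γ (L+1) 0 0 = γ 0 := by
  simp [toeplitzCov]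

lemma LD.h0s {L : ℕ} (j : Fin L) :
    toeplitzCov γ (L+1) 0 j.succ = covVec γ L j := by
  simp only [toeplitzCov, covVec, Fin.val_succ, Fin.val_zero]
  congr 1

lemma LD.hs0 {L : ℕ} (i : Fin L) :
    toeplitzCov γ (L+1) i.succ 0 = covVec γ L i := by
  simp only [toeplitzCov, covVec, Fin.val_succ, Fin.val_zero]
  congr 1

lemma LD.hss {L : ℕ} (i j : Fin L) :
    toeplitzCov γ (L+1) i.succ j.succ = toeplitzCov γ L i j := by
  simp only [toeplitzCov, Fin.val_succ]
  congr 1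
  omega

lemma LD.hgc {L : ℕ} (i : Fin L) :
    covVec γ (L+1) i.castSucc = covVec γ L i := by
  simp [covVec]

lemma LD.hgl {L : ℕ} : covVec γ (L+1) (Fin.last L) = γ (L+1) := by
  simp [covVec]

lemma LD.persym {L : ℕ} (i k : Fin L) :
    toeplitzCov γ L i (Fin.rev k) = toeplitzCov γ L (Fin.rev i) k := by
  have hi := i.isLt; have hk := k.isLt
  simp only [toeplitzCov, Fin.val_rev]
  congr 1
  omega

lemma LD.rev_cov {L : ℕ} (j : Fin L) : covVec γ L (Fin.rev j) = γ (L - j) := by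
  have hj := j.isLt
  simp only [covVec, Fin.val_rev]
  congr 1
  omega

-- positivity of the prediction error
lemma LD.predError_pos {L : ℕ} (hL : (toeplitzCov γ L).PosDef)
    (hL1 : (toeplitzCov γ (L+1)).PosDef) : 0 < predError γ L := by
  set Ψ := bestPredictor γ L with hΨ
  set y : Fin (L+1) → ℝ := Fin.cons 1 Ψ with hy
  have hy0 : y ≠ 0 := by
    intro h
    have := congrFun h 0
    simp [hy] at this
  have hq := hL1.dotProduct_mulVec_pos hy0
  have hmv : ∀ i, (toeplitzCov γ L *ᵥ Ψ) i = -(covVec γ L i) := by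
    intro i
    rw [LD.gamma_mulVec γ hL]; rfl
  have key : star y ⬝ᵥ (toeplitzCov γ (L+1) *ᵥ y) = predError γ L := by
    have hrow0 : (toeplitzCov γ (L+1) *ᵥ y) 0 = γ 0 + covVec γ L ⬝ᵥ Ψ := by
      simp only [mulVec, dotProduct, Fin.sum_univ_succ, hy, Fin.cons_zero, Fin.cons_succ,
        LD.h00, LD.h0s, mul_one]
    have hrows : ∀ i : Fin L, (toeplitzCov γ (L+1) *ᵥ y) i.succ = 0 := by
      intro i
      have : (toeplitzCov γ (L+1) *ᵥ y) i.succ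
          = covVec γ L i + (toeplitzCov γ L *ᵥ Ψ) i := by
        simp only [mulVec, dotProduct, Fin.sum_univ_succ, hy, Fin.cons_zero, Fin.cons_succ,
          LD.hs0, LD.hss, mul_one]
      rw [this, hmv]
      ring
    calc star y ⬝ᵥ (toeplitzCov γ (L+1) *ᵥ y)
        = ∑ i : Fin (L+1), y i * (toeplitzCov γ (L+1) *ᵥ y) i := by
          simp [dotProduct]
      _ = y 0 * (toeplitzCov γ (L+1) *ᵥ y) 0
          + ∑ i : Fin L, y i.succ * (toeplitzCov γ (L+1) *ᵥ y) i.succ := by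
          rw [Fin.sum_univ_succ]
      _ = predError γ L := by
          simp only [hrow0, hrows, mul_zero, Finset.sum_const_zero, add_zero]
          simp only [hy, Fin.cons_zero, one_mul]
          rw [LD.predError_eq]
  rw [key] at hq
  exact hq

lemma LD.step {L : ℕ} (hL : (toeplitzCov γ L).PosDef)
    (hL1 : (toeplitzCov γ (L+1)).PosDef) :
    predError γ (L+1) = (1 - psiLL γ (L+1) ^ 2) * predError γ L := by
  set Ψ := bestPredictor γ L with hΨ
  set e := predError γ L with he
  have hepos : 0 < e := LD.predError_pos γ hL hL1
  set b : Fin L → ℝ := fun i => γ (L - (i : ℕ)) with hb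
  set ψ : ℝ := -(γ (L+1) + b ⬝ᵥ Ψ) / e with hψdef
  have hψe : ψ * e = -(γ (L+1) + b ⬝ᵥ Ψ) := by
    rw [hψdef, div_mul_cancel₀ _ hepos.ne']
  set x : Fin (L+1) → ℝ := Fin.snoc (fun i => Ψ i + ψ * Ψ (Fin.rev i)) ψ with hx
  have hmv : ∀ i, (toeplitzCov γ L *ᵥ Ψ) i = -(covVec γ L i) := by
    intro i
    rw [LD.gamma_mulVec γ hL]; rfl
  -- reversed system
  have hrevsum : ∀ i : Fin L,
      ∑ j : Fin L, toeplitzCov γ L i j * Ψ (Fin.rev j) = -(covVec γ L (Fin.rev i)) := by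
    intro i
    have hre : ∑ j : Fin L, toeplitzCov γ L i j * Ψ (Fin.rev j)
        = ∑ j : Fin L, toeplitzCov γ L (Fin.rev i) j * Ψ j := by
      rw [← Equiv.sum_comp (Fin.revPerm) (fun j => toeplitzCov γ L i j * Ψ (Fin.rev j))]
      refine Finset.sum_congr rfl (fun k _ => ?_)
      simp [Fin.revPerm, LD.persym γ i k]
    rw [hre, ← hmv (Fin.rev i)]
    rfl
  -- b reversed is g
  have hbrev : ∀ j : Fin L, b (Fin.rev j) = covVec γ L j := by
    intro j
    have hj := j.isLt
    simp only [hb, covVec, Fin.val_rev]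
    congr 1
    omega
  have hgrevb : ∀ j : Fin L, covVec γ L (Fin.rev j) = b j := by
    intro j
    rw [LD.rev_cov]
  have hbΨrev : ∑ j : Fin L, b j * Ψ (Fin.rev j) = covVec γ L ⬝ᵥ Ψ := by
    rw [← Equiv.sum_comp (Fin.revPerm) (fun j => b j * Ψ (Fin.rev j))]
    refine Finset.sum_congr rfl (fun k _ => ?_)
    simp [Fin.revPerm, hbrev k]
  have hgΨrev : ∑ j : Fin L, covVec γ L j * Ψ (Fin.rev j) = b ⬝ᵥ Ψ := by
    rw [← Equiv.sum_comp (Fin.revPerm) (fun j => covVec γ L j * Ψ (Fin.rev j))]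
    refine Finset.sum_congr rfl (fun k _ => ?_)
    simp [Fin.revPerm, hgrevb k]
  have hgΨ : covVec γ L ⬝ᵥ Ψ = e - γ 0 := by
    rw [he, LD.predError_eq]; ring
  -- x solves the order L+1 system
  have hsolve : toeplitzCov γ (L+1) *ᵥ x = -(covVec γ (L+1)) := by
    funext i
    refine Fin.lastCases ?_ ?_ i
    · -- last row
      have hexp : (toeplitzCov γ (L+1) *ᵥ x) (Fin.last L)
          = ∑ j : Fin L, b j * (Ψ j + ψ * Ψ (Fin.rev j)) + γ 0 * ψ := by
        simp only [mulVec, dotProduct, Fin.sum_univ_castSucc, hx, Fin.snoc_castSucc,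
          Fin.snoc_last, LD.hlc, LD.hll, hb]
      rw [hexp]
      have : ∑ j : Fin L, b j * (Ψ j + ψ * Ψ (Fin.rev j))
          = b ⬝ᵥ Ψ + ψ * (covVec γ L ⬝ᵥ Ψ) := by
        calc ∑ j : Fin L, b j * (Ψ j + ψ * Ψ (Fin.rev j))
            = ∑ j : Fin L, (b j * Ψ j + ψ * (b j * Ψ (Fin.rev j))) :=
              Finset.sum_congr rfl (fun k _ => by ring)
          _ = b ⬝ᵥ Ψ + ψ * ∑ j : Fin L, b j * Ψ (Fin.rev j) := by
              rw [Finset.sum_add_distrib, ← Finset.mul_sum]; rfl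
          _ = b ⬝ᵥ Ψ + ψ * (covVec γ L ⬝ᵥ Ψ) := by rw [hbΨrev]
      rw [this, hgΨ]
      have hrhs : (-(covVec γ (L+1))) (Fin.last L) = -γ (L+1) := by
        simp [LD.hgl]
      rw [hrhs]
      have : b ⬝ᵥ Ψ + ψ * (e - γ 0) + γ 0 * ψ = b ⬝ᵥ Ψ + ψ * e := by ring
      rw [this, hψe]
      ring
    · -- castSucc rows
      intro i₀
      have hexp : (toeplitzCov γ (L+1) *ᵥ x) i₀.castSucc
          = ∑ j : Fin L, toeplitzCov γ L i₀ j * (Ψ j + ψ * Ψ (Fin.rev j)) + b i₀ * ψ := by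
        simp only [mulVec, dotProduct, Fin.sum_univ_castSucc, hx, Fin.snoc_castSucc,
          Fin.snoc_last, LD.hcc, LD.hcl, hb]
      rw [hexp]
      have hsplit : ∑ j : Fin L, toeplitzCov γ L i₀ j * (Ψ j + ψ * Ψ (Fin.rev j))
          = (toeplitzCov γ L *ᵥ Ψ) i₀ + ψ * ∑ j : Fin L, toeplitzCov γ L i₀ j * Ψ (Fin.rev j) := by
        calc ∑ j : Fin L, toeplitzCov γ L i₀ j * (Ψ j + ψ * Ψ (Fin.rev j))
            = ∑ j : Fin L, (toeplitzCov γ L i₀ j * Ψ j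
                + ψ * (toeplitzCov γ L i₀ j * Ψ (Fin.rev j))) :=
              Finset.sum_congr rfl (fun k _ => by ring)
          _ = (toeplitzCov γ L *ᵥ Ψ) i₀
              + ψ * ∑ j : Fin L, toeplitzCov γ L i₀ j * Ψ (Fin.rev j) := by
              rw [Finset.sum_add_distrib, ← Finset.mul_sum]; rfl
      rw [hsplit, hmv, hrevsum, hgrevb]
      have hrhs : (-(covVec γ (L+1))) i₀.castSucc = -(covVec γ L i₀) := by
        simp [LD.hgc]
      rw [hrhs]
      ring
  have hxb : x = bestPredictor γ (L+1) := LD.eq_bestPredictor γ hL1 x hsolve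
  have hpsi : psiLL γ (L+1) = ψ := by
    have h1 : psiLL γ (L+1) = bestPredictor γ (L+1) ⟨L, Nat.lt_succ_self L⟩ := by
      simp [psiLL]
    have h2 : (⟨L, Nat.lt_succ_self L⟩ : Fin (L+1)) = Fin.last L := rfl
    rw [h1, h2, ← hxb, hx, Fin.snoc_last]
  -- compute the new prediction error
  have hcomp : predError γ (L+1) = (1 - ψ ^ 2) * e := by
    rw [LD.predError_eq, ← hxb]
    have hdot : covVec γ (L+1) ⬝ᵥ x
        = ∑ j : Fin L, covVec γ L j * (Ψ j + ψ * Ψ (Fin.rev j)) + γ (L+1) * ψ := by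
      simp only [dotProduct, Fin.sum_univ_castSucc, hx, Fin.snoc_castSucc, Fin.snoc_last,
        LD.hgc, LD.hgl]
    rw [hdot]
    have hsplit : ∑ j : Fin L, covVec γ L j * (Ψ j + ψ * Ψ (Fin.rev j))
        = covVec γ L ⬝ᵥ Ψ + ψ * (b ⬝ᵥ Ψ) := by
      calc ∑ j : Fin L, covVec γ L j * (Ψ j + ψ * Ψ (Fin.rev j))
          = ∑ j : Fin L, (covVec γ L j * Ψ j + ψ * (covVec γ L j * Ψ (Fin.rev j))) :=
            Finset.sum_congr rfl (fun k _ => by ring)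
        _ = covVec γ L ⬝ᵥ Ψ + ψ * ∑ j : Fin L, covVec γ L j * Ψ (Fin.rev j) := by
            rw [Finset.sum_add_distrib, ← Finset.mul_sum]; rfl
        _ = covVec γ L ⬝ᵥ Ψ + ψ * (b ⬝ᵥ Ψ) := by rw [hgΨrev]
    rw [hsplit, hgΨ]
    have : γ 0 + (e - γ 0 + ψ * (b ⬝ᵥ Ψ) + γ (L+1) * ψ)
        = e + ψ * (b ⬝ᵥ Ψ + γ (L+1)) := by ring
    rw [this]
    have : ψ * (b ⬝ᵥ Ψ + γ (L+1)) = ψ * (-(ψ * e)) := by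
      rw [hψe]
      ring
    rw [this]
    ring
  rw [hcomp, hpsi]

end Aux

/-- Levinson–Durbin update for the gain of goodness of fit.
If `Γ_L` is positive definite for every `1 ≤ L ≤ M`, then for every `1 ≤ L ≤ M` one has
`e_L = (1 - ψ_{L,L}²) e_{L-1}`; in particular `e_{L-1}/e_L = 1/(1 - ψ_{L,L}²)` whenever
`e_L ≠ 0`. (Note `e_0 = γ_0 - (empty dot product) = γ_0`.) -/
theorem predError_levinson_durbin_update (M : ℕ) (hM : 1 ≤ M) (γ : ℕ → ℝ)
    (hpd : ∀ L, 1 ≤ L → L ≤ M → (toeplitzCov γ L).PosDef) :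
    ∀ L, 1 ≤ L → L ≤ M →
      predError γ L = (1 - psiLL γ L ^ 2) * predError γ (L - 1) ∧
        (predError γ L ≠ 0 →
          predError γ (L - 1) / predError γ L = 1 / (1 - psiLL γ L ^ 2)) := by
  intro L hL1 hLM
  obtain ⟨n, rfl⟩ : ∃ n, L = n + 1 := ⟨L - 1, by omega⟩
  have hpdn1 : (toeplitzCov γ (n+1)).PosDef := hpd (n+1) (by omega) hLM
  have hpdn : (toeplitzCov γ n).PosDef := by
    rcases Nat.eq_zero_or_pos n with h | h
    · subst h; exact LD.posDef_zero γ
    · exact hpd n h (by omega)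
  have hmain : predError γ (n+1) = (1 - psiLL γ (n+1) ^ 2) * predError γ n :=
    LD.step γ hpdn hpdn1
  have hsub : n + 1 - 1 = n := rfl
  refine ⟨by rw [hsub, hmain], ?_⟩
  intro hne
  have h1 : (1 - psiLL γ (n+1) ^ 2) ≠ 0 := fun h => hne (by rw [hmain, h, zero_mul])
  have h2 : predError γ n ≠ 0 := fun h => hne (by rw [hmain, h, mul_zero])
  rw [hsub, hmain]
  rw [div_mul_eq_div_div_swap, div_self h2, one_div]
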